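/- Let $a : \mathbb{N} \to \mathbb{N}$ satisfy $a(0)=0$, $a(1)=1$, and $a(p) = \lceil p/2 \rceil + a(\lceil p/2 \rceil) + a(\lceil p/2 \rceil - 1)$ for $p \geq 2$. Then $a(n) = \Theta(n \log n)$; in particular there exist constants $c_1, c_2 > 0$ such that $c_1 \, n \log n \leq a(n) \leq c_2 \, n \log n$ for all $n \geq 2$. -/

import Mathlib

section
variable (a : ℕ → ℕ) (ha0 : a 0 = 0) (ha1 : a 1 = 1)
    (harec : ∀ p, 2 ≤ p → a p = (p + 1) / 2 + a ((p + 1) / 2) + a ((p + 1) / 2 - 1))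

include ha0 ha1 harec

lemma amono : ∀ n, a n ≤ a (n + 1) := by
  intro n
  induction n using Nat.strong_induction_on with
  | _ n ih =>
    match n with
    | 0 => rw [ha0, ha1]; omega
    | 1 =>
      have h2 := harec 2 (by norm_num)
      norm_num at h2
      rw [ha1, h2, ha1, ha0]; omega
    | (n+2) =>
      show a (n + 2) ≤ a (n + 3)
      rcases Nat.even_or_odd (n+2) with ⟨k, hk⟩ | ⟨k, hk⟩
      · -- n+2 = 2k, k ≥ 1
        have hk1 : 1 ≤ k := by omega
        have h1 := harec (n+2) (by omega)
        have h2 := harec (n+3) (by omega)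
        have e1 : (n + 2 + 1) / 2 = k := by omega
        have e2 : (n + 3 + 1) / 2 = k + 1 := by omega
        rw [e1] at h1
        rw [e2] at h2
        have i1 : a (k - 1) ≤ a k := by
          rcases Nat.eq_or_lt_of_le hk1 with h | h
          · rw [← h]; simp [ha0]
          · have := ih (k - 1) (by omega)
            have e : k - 1 + 1 = k := by omega
            rwa [e] at this
        have i2 : a k ≤ a (k + 1) := ih k (by omega)
        simp only [Nat.add_sub_cancel] at h2
        omega
      · -- n+2 = 2k+1
        have h1 := harec (n+2) (by omega)
        have h2 := harec (n+3) (by omega)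
        have e1 : (n + 2 + 1) / 2 = k + 1 := by omega
        have e2 : (n + 3 + 1) / 2 = k + 1 := by omega
        rw [e1] at h1; rw [e2] at h2
        omega

end

section
variable (a : ℕ → ℕ) (ha0 : a 0 = 0) (ha1 : a 1 = 1)
    (harec : ∀ p, 2 ≤ p → a p = (p + 1) / 2 + a ((p + 1) / 2) + a ((p + 1) / 2 - 1))

include ha0 ha1 harec

lemma aodd : ∀ k, 2 ≤ k → a (2 * k - 1) = a (2 * k) := by
  intro k hk
  have h1 := harec (2 * k - 1) (by omega)
  have h2 := harec (2 * k) (by omega)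
  have e1 : (2 * k - 1 + 1) / 2 = k := by omega
  have e2 : (2 * k + 1) / 2 = k := by omega
  rw [e1] at h1; rw [e2] at h2; omega

lemma apow : ∀ L, 2 ^ L * (2 * L + 1) ≤ 4 * a (2 ^ L) := by
  intro L
  induction L with
  | zero => simp [ha1]
  | succ L ih =>
    have h2 := harec 2 (by norm_num)
    norm_num [ha1, ha0] at h2
    match L with
    | 0 => simp [h2]
    | 1 =>
      have h4 := harec 4 (by norm_num)
      norm_num [h2, ha1] at h4
      norm_num [h4]
    | (L+2) =>
      show 2 ^ (L + 3) * (2 * (L + 3) + 1) ≤ 4 * a (2 ^ (L + 3))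
      have hp : (2:ℕ) ^ (L + 3) = 2 * 2 ^ (L + 2) := by ring
      have hp1 : 1 ≤ (2:ℕ) ^ (L + 2) := Nat.one_le_two_pow
      have hrec := harec (2 ^ (L + 3)) (by omega)
      have e1 : (2 ^ (L + 3) + 1) / 2 = 2 ^ (L + 2) := by
        have : (2:ℕ) ^ (L + 3) = 2 * 2 ^ (L + 2) := by ring
        omega
      rw [e1] at hrec
      have hodd := aodd a ha0 ha1 harec (2 ^ (L + 1)) (by
        have : (2:ℕ)^(L+1) = 2 * 2^L := by ring
        have := Nat.one_le_two_pow (n := L); omega)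
      have e2 : 2 * 2 ^ (L + 1) = 2 ^ (L + 2) := by ring
      rw [e2] at hodd
      have key : 2 ^ (L + 3) * (2 * (L + 3) + 1)
          = 2 * (2 ^ (L + 2) * (2 * (L + 2) + 1)) + 4 * 2 ^ (L + 2) := by ring
      omega

end

section
variable (a : ℕ → ℕ) (ha0 : a 0 = 0) (ha1 : a 1 = 1)
    (harec : ∀ p, 2 ≤ p → a p = (p + 1) / 2 + a ((p + 1) / 2) + a ((p + 1) / 2 - 1))

include ha0 ha1 harec

lemma aub : ∀ n, 2 ≤ n → a n ≤ 2 * n * (Nat.log 2 n + 1) := by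
  intro n
  induction n using Nat.strong_induction_on with
  | _ n ih =>
    intro hn
    have h2 := harec 2 (by norm_num)
    norm_num [ha1, ha0] at h2
    rcases Nat.lt_or_ge n 5 with h5 | h5
    · -- n = 2, 3, 4 : base cases, using log ≥ 0 only
      have h3 := harec 3 (by norm_num)
      norm_num [h2, ha1] at h3
      have h4 := harec 4 (by norm_num)
      norm_num [h2, ha1] at h4
      interval_cases n
      · rw [h2]; omega
      · rw [h3]; omega
      · rw [h4]; omega
    · set m := (n + 1) / 2 with hm
      set q := m - 1 with hq
      have hm3 : 3 ≤ m := by omega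
      have hq2 : 2 ≤ q := by omega
      have hmn : m + q ≤ n := by omega
      have hrec := harec n (by omega)
      rw [← hm, ← hq] at hrec
      have IHm := ih m (by omega) (by omega)
      have IHq := ih q (by omega) (by omega)
      set A := Nat.log 2 m with hA
      set B := Nat.log 2 q with hB
      set C := Nat.log 2 n with hC
      have hAC : A ≤ C := Nat.log_mono_right (by omega)
      have hBA : B ≤ A := Nat.log_mono_right (by omega)
      rcases Nat.lt_or_ge A C with hcase | hcase
      · -- C ≥ A + 1
        have p1 : q * (B + 1) ≤ q * (A + 1) := Nat.mul_le_mul_left q (by omega)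
        have p2 : (m + q) * (A + 1) ≤ n * (A + 1) := Nat.mul_le_mul_right _ hmn
        have p3 : n * (A + 2) ≤ n * (C + 1) := Nat.mul_le_mul_left n (by omega)
        have hq1 : q + 1 = m := by omega
        linarith [IHm, IHq, p1, p2, p3, hmn]
      · -- C = A
        have hCA : C = A := le_antisymm hcase hAC
        have hnpow : n < 2 ^ (A + 1) := by
          rw [← hCA]; exact Nat.lt_pow_succ_log_self (by norm_num) n
        have hqpow : q < 2 ^ A := by
          have : 2 * q + 1 ≤ n := by omega
          have h2A : 2 ^ (A + 1) = 2 * 2 ^ A := by ring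
          omega
        have hBA1 : B + 1 ≤ A := by
          have : B < A := Nat.log_lt_of_lt_pow (by omega) hqpow
          omega
        have p1 : q * (B + 1) ≤ q * A := Nat.mul_le_mul_left q hBA1
        have p2 : (m + q) * A ≤ n * A := Nat.mul_le_mul_right _ hmn
        rw [hCA]
        have hq1 : q + 1 = m := by omega
        linarith [IHm, IHq, p1, p2, hmn, hm3]

end

/-- If `a 0 = 0`, `a 1 = 1` and `a p = ⌈p/2⌉ + a ⌈p/2⌉ + a (⌈p/2⌉ - 1)` for `p ≥ 2`,
then `a n = Θ(n log n)`: there are constants `c₁, c₂ > 0` with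
`c₁ n log₂ n ≤ a n ≤ c₂ n log₂ n` for all `n ≥ 2`. -/
theorem stmt_4 (a : ℕ → ℕ) (ha0 : a 0 = 0) (ha1 : a 1 = 1)
    (harec : ∀ p, 2 ≤ p → a p = (p + 1) / 2 + a ((p + 1) / 2) + a ((p + 1) / 2 - 1)) :
    ∃ c₁ c₂ : ℝ, 0 < c₁ ∧ 0 < c₂ ∧ ∀ n : ℕ, 2 ≤ n →
      c₁ * n * Real.logb 2 n ≤ (a n : ℝ) ∧ (a n : ℝ) ≤ c₂ * n * Real.logb 2 n := by
  have mono : Monotone a := monotone_nat_of_le_succ (amono a ha0 ha1 harec)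
  refine ⟨1/8, 4, by norm_num, by norm_num, fun n hn => ?_⟩
  set L := Nat.log 2 n with hLdef
  have hL1 : 1 ≤ L := by
    have h21 : (2:ℕ) ^ 1 ≤ n := by simpa using hn
    exact (Nat.le_log_iff_pow_le (by norm_num) (by omega : n ≠ 0)).2 h21
  have h2L : 2 ^ L ≤ n := Nat.pow_log_le_self 2 (by omega)
  have hn2L : n < 2 ^ (L + 1) := Nat.lt_pow_succ_log_self (by norm_num) n
  have hpow := apow a ha0 ha1 harec L
  have hman : a (2 ^ L) ≤ a n := mono h2L
  have hub := aub a ha0 ha1 harec n hn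
  -- real versions
  have hx0 : (0:ℝ) ≤ Real.logb 2 n := Real.logb_nonneg (by norm_num) (by exact_mod_cast hn.trans' (by norm_num))
  have hlogpow : ∀ k : ℕ, Real.logb 2 ((2:ℝ) ^ k) = k := by
    intro k
    rw [Real.logb_pow, Real.logb_self_eq_one (b := 2) (by norm_num)]
    ring
  have hxub : Real.logb 2 n ≤ (L:ℝ) + 1 := by
    have : Real.logb 2 n ≤ Real.logb 2 ((2:ℝ) ^ (L+1)) := by
      apply Real.logb_le_logb_of_le (by norm_num)
      · positivity
      · exact_mod_cast hn2L.le
    rwa [hlogpow, Nat.cast_add, Nat.cast_one] at this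
  have hxlb : (L:ℝ) ≤ Real.logb 2 n := by
    have : Real.logb 2 ((2:ℝ) ^ L) ≤ Real.logb 2 n := by
      apply Real.logb_le_logb_of_le (by norm_num)
      · positivity
      · exact_mod_cast h2L
    rwa [hlogpow] at this
  have hP : ((2:ℝ) ^ L) ≤ (n:ℝ) := by exact_mod_cast h2L
  have hn2 : (n:ℝ) ≤ 2 * (2:ℝ) ^ L := by
    have : (n:ℝ) < (2:ℝ) ^ (L + 1) := by exact_mod_cast hn2L
    rw [pow_succ] at this; linarith
  have hpowR : (2:ℝ) ^ L * (2 * L + 1) ≤ 4 * (a (2 ^ L) : ℝ) := by exact_mod_cast hpow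
  have hmanR : ((a (2 ^ L) : ℕ) : ℝ) ≤ (a n : ℝ) := by exact_mod_cast hman
  have hubR : (a n : ℝ) ≤ 2 * n * ((L:ℝ) + 1) := by exact_mod_cast hub
  have hLR : (1:ℝ) ≤ (L:ℝ) := by exact_mod_cast hL1
  have hPpos : (0:ℝ) < (2:ℝ) ^ L := by positivity
  constructor
  · have key : (n:ℝ) * Real.logb 2 n ≤ (2 * (2:ℝ) ^ L) * ((L:ℝ) + 1) := by
      apply mul_le_mul hn2 hxub hx0 (by positivity)
    nlinarith [mul_pos hPpos (lt_of_lt_of_le one_pos hLR)]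
  · have key : (n:ℝ) * (L:ℝ) ≤ (n:ℝ) * Real.logb 2 n := by
      apply mul_le_mul_of_nonneg_left hxlb (by positivity)
    nlinarith [key, hubR, hLR, mul_le_mul_of_nonneg_left hLR (by positivity : (0:ℝ) ≤ (n:ℝ))]
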